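/- Let ε ∈ (0,1) and consider the stationary chain generated by (τ₁, p₁). The stationary distribution of the order-2 Markov chain (X_{n-1}, X_n) restricted to admissible pairs assigns to the symbol marginal: P(X_n = 2) = 1/3, P(X_n = 1) = 2(1−ε)/3, P(X_n = 0) = 2ε/3. -/

import Mathlib

open MeasureTheory ProbabilityTheory
open scoped ENNReal

lemma stmt17_aux {Ω : Type*} [MeasurableSpace Ω] (μ : Measure Ω) [IsProbabilityMeasure μ]
    (ε : ℝ) (hε : ε ∈ Set.Ioo (0 : ℝ) 1)
    (phase : Ω → Fin 3) (flip : ℤ → Ω → Bool)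
    (hjoint : ∀ (k : Fin 3) (s : Finset ℤ) (b : ℤ → Bool),
      μ {ω | phase ω = k ∧ ∀ i ∈ s, flip i ω = b i} =
        (3 : ℝ≥0∞)⁻¹ *
          ∏ i ∈ s, (if b i then ENNReal.ofReal ε else ENNReal.ofReal (1 - ε)))
    (X : ℤ → Ω → Fin 3)
    (hX : ∀ (n : ℤ) (ω : Ω),
      X n ω = if (n + (phase ω : ℤ)) % 3 = 0 then 2 else if flip n ω then 0 else 1)
    (n : ℤ) (k0 k1 k2 : Fin 3)
    (hcover : ∀ k : Fin 3, k = k0 ∨ k = k1 ∨ k = k2)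
    (h0 : (n + (k0 : ℤ)) % 3 = 0) (h1 : (n + (k1 : ℤ)) % 3 ≠ 0)
    (h2 : (n + (k2 : ℤ)) % 3 ≠ 0) :
      μ {ω | X n ω = 2} = ENNReal.ofReal (1 / 3) ∧
      μ {ω | X n ω = 1} = ENNReal.ofReal (2 * (1 - ε) / 3) ∧
      μ {ω | X n ω = 0} = ENNReal.ofReal (2 * ε / 3) := by
  obtain ⟨hε0, hε1⟩ := hε
  have hk10 : k1 ≠ k0 := fun e => h1 (by rw [e]; exact h0)
  have hk20 : k2 ≠ k0 := fun e => h2 (by rw [e]; exact h0)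
  have keyd : ∀ a b : Fin 3, ¬(∀ k : Fin 3, k = a ∨ k = b) := by decide
  have hk12 : k1 ≠ k2 := fun e => keyd k0 k1
    (fun k => (hcover k).imp id (fun h => h.elim id (fun h => h.trans e.symm)))
  have hphase : ∀ ω, X n ω = if phase ω = k0 then 2 else if flip n ω then 0 else 1 := by
    intro ω
    rcases hcover (phase ω) with h | h | h <;> rw [hX n ω, h]
    · rw [if_pos h0, if_pos rfl]
    · rw [if_neg h1, if_neg hk10]
    · rw [if_neg h2, if_neg hk20]
  have hS2 : {ω | X n ω = 2} = {ω | phase ω = k0 ∧ ∀ i ∈ (∅ : Finset ℤ), flip i ω = true} := by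
    ext ω
    simp only [Set.mem_setOf_eq, hphase ω, Finset.notMem_empty, false_implies, implies_true,
      and_true]
    rcases hcover (phase ω) with h | h | h <;> rw [h]
    · simp
    · simp only [if_neg hk10, hk10, iff_false]
      cases flip n ω <;> simp
    · simp only [if_neg hk20, hk20, iff_false]
      cases flip n ω <;> simp
  have hS1 : {ω | X n ω = 1} =
      {ω | phase ω = k1 ∧ ∀ i ∈ ({n} : Finset ℤ), flip i ω = false} ∪
      {ω | phase ω = k2 ∧ ∀ i ∈ ({n} : Finset ℤ), flip i ω = false} := by
    ext ω
    simp only [Set.mem_setOf_eq, hphase ω, Set.mem_union, Finset.mem_singleton, forall_eq]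
    rcases hcover (phase ω) with h | h | h <;> rw [h]
    · simp only [if_pos rfl, hk10.symm, hk20.symm, false_and, or_false, iff_false]
      simp
    · simp only [if_neg hk10, hk12, false_and, or_false, true_and]
      cases flip n ω <;> simp
    · simp only [if_neg hk20, hk12.symm, false_and, false_or, true_and]
      cases flip n ω <;> simp
  have hS0 : {ω | X n ω = 0} =
      {ω | phase ω = k1 ∧ ∀ i ∈ ({n} : Finset ℤ), flip i ω = true} ∪
      {ω | phase ω = k2 ∧ ∀ i ∈ ({n} : Finset ℤ), flip i ω = true} := by
    ext ω
    simp only [Set.mem_setOf_eq, hphase ω, Set.mem_union, Finset.mem_singleton, forall_eq]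
    rcases hcover (phase ω) with h | h | h <;> rw [h]
    · simp only [if_pos rfl, hk10.symm, hk20.symm, false_and, or_false, iff_false]
      simp
    · simp only [if_neg hk10, hk12, false_and, or_false, true_and]
      cases flip n ω <;> simp
    · simp only [if_neg hk20, hk12.symm, false_and, false_or, true_and]
      cases flip n ω <;> simp
  have h3 : (3 : ℝ≥0∞)⁻¹ = ENNReal.ofReal (1/3) := by
    rw [ENNReal.ofReal_div_of_pos (by norm_num)]
    norm_num
  have m2 : μ {ω | X n ω = 2} = ENNReal.ofReal (1/3) := by
    rw [hS2, hjoint]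
    rw [Finset.prod_empty, mul_one, h3]
  have mtrue : ∀ k : Fin 3,
      μ {ω | phase ω = k ∧ ∀ i ∈ ({n} : Finset ℤ), flip i ω = true} = ENNReal.ofReal (ε/3) := by
    intro k
    rw [hjoint, Finset.prod_singleton, h3, if_pos rfl,
      ← ENNReal.ofReal_mul (by norm_num : (0:ℝ) ≤ 1/3)]
    congr 1; ring
  have mfalse : ∀ k : Fin 3,
      μ {ω | phase ω = k ∧ ∀ i ∈ ({n} : Finset ℤ), flip i ω = false} =
        ENNReal.ofReal ((1-ε)/3) := by
    intro k
    rw [hjoint, Finset.prod_singleton, h3, if_neg (by simp),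
      ← ENNReal.ofReal_mul (by norm_num : (0:ℝ) ≤ 1/3)]
    congr 1; ring
  have le0 : μ {ω | X n ω = 0} ≤ ENNReal.ofReal (2*ε/3) := by
    rw [hS0]
    refine (measure_union_le _ _).trans ?_
    rw [mtrue, mtrue, ← ENNReal.ofReal_add (by positivity) (by positivity)]
    apply ENNReal.ofReal_le_ofReal; linarith
  have le1 : μ {ω | X n ω = 1} ≤ ENNReal.ofReal (2*(1-ε)/3) := by
    rw [hS1]
    refine (measure_union_le _ _).trans ?_
    rw [mfalse, mfalse, ← ENNReal.ofReal_add (by linarith) (by linarith)]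
    apply ENNReal.ofReal_le_ofReal; linarith
  have hunion : (Set.univ : Set Ω) ⊆
      {ω | X n ω = 0} ∪ {ω | X n ω = 1} ∪ {ω | X n ω = 2} := by
    intro ω _
    have : X n ω = 0 ∨ X n ω = 1 ∨ X n ω = 2 := by omega
    rcases this with h | h | h <;> simp [h]
  have htot : (1 : ℝ≥0∞) ≤ μ {ω | X n ω = 0} + μ {ω | X n ω = 1} + μ {ω | X n ω = 2} := by
    calc (1 : ℝ≥0∞) = μ Set.univ := (measure_univ).symm
    _ ≤ μ ({ω | X n ω = 0} ∪ {ω | X n ω = 1} ∪ {ω | X n ω = 2}) := measure_mono hunion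
    _ ≤ _ := le_trans (measure_union_le _ _) (by gcongr; exact measure_union_le _ _)
  have hsum : ENNReal.ofReal (2*ε/3) + ENNReal.ofReal (2*(1-ε)/3) + ENNReal.ofReal (1/3)
      = 1 := by
    rw [← ENNReal.ofReal_add (by positivity) (by linarith),
      ← ENNReal.ofReal_add (by linarith) (by norm_num)]
    rw [show 2*ε/3 + 2*(1-ε)/3 + 1/3 = (1:ℝ) by ring, ENNReal.ofReal_one]
  rw [m2] at htot
  have key : ENNReal.ofReal (2*ε/3) + ENNReal.ofReal (2*(1-ε)/3)
      ≤ μ {ω | X n ω = 0} + μ {ω | X n ω = 1} := by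
    have h' := htot
    rw [← hsum] at h'
    exact (ENNReal.add_le_add_iff_right ENNReal.ofReal_ne_top).mp h'
  have e0 : μ {ω | X n ω = 0} = ENNReal.ofReal (2*ε/3) := by
    refine le_antisymm le0 ?_
    have h' : ENNReal.ofReal (2*ε/3) + ENNReal.ofReal (2*(1-ε)/3)
        ≤ μ {ω | X n ω = 0} + ENNReal.ofReal (2*(1-ε)/3) :=
      key.trans (by gcongr)
    exact (ENNReal.add_le_add_iff_right ENNReal.ofReal_ne_top).mp h'
  have e1 : μ {ω | X n ω = 1} = ENNReal.ofReal (2*(1-ε)/3) := by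
    refine le_antisymm le1 ?_
    have h' : ENNReal.ofReal (2*(1-ε)/3) + ENNReal.ofReal (2*ε/3)
        ≤ μ {ω | X n ω = 1} + ENNReal.ofReal (2*ε/3) := by
      rw [add_comm (ENNReal.ofReal (2*(1-ε)/3))]
      exact key.trans (by rw [add_comm]; gcongr)
    exact (ENNReal.add_le_add_iff_right ENNReal.ofReal_ne_top).mp h'
  exact ⟨m2, e1, e0⟩


/-- For ε ∈ (0,1), the stationary chain generated by (τ₁, p₁) — equivalently, the random
perturbation of the periodic pattern (2,1,1) with uniformly random phase in which each 1 is
independently flipped to 0 with probability ε — has symbol marginal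
P(X_n = 2) = 1/3, P(X_n = 1) = 2(1−ε)/3, P(X_n = 0) = 2ε/3. -/
theorem stmt17 {Ω : Type*} [MeasurableSpace Ω] (μ : Measure Ω) [IsProbabilityMeasure μ]
    (ε : ℝ) (hε : ε ∈ Set.Ioo (0 : ℝ) 1)
    (phase : Ω → Fin 3) (flip : ℤ → Ω → Bool)
    (hjoint : ∀ (k : Fin 3) (s : Finset ℤ) (b : ℤ → Bool),
      μ {ω | phase ω = k ∧ ∀ i ∈ s, flip i ω = b i} =
        (3 : ℝ≥0∞)⁻¹ *
          ∏ i ∈ s, (if b i then ENNReal.ofReal ε else ENNReal.ofReal (1 - ε)))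
    (X : ℤ → Ω → Fin 3)
    (hX : ∀ (n : ℤ) (ω : Ω),
      X n ω = if (n + (phase ω : ℤ)) % 3 = 0 then 2 else if flip n ω then 0 else 1) :
    ∀ n : ℤ,
      μ {ω | X n ω = 2} = ENNReal.ofReal (1 / 3) ∧
      μ {ω | X n ω = 1} = ENNReal.ofReal (2 * (1 - ε) / 3) ∧
      μ {ω | X n ω = 0} = ENNReal.ofReal (2 * ε / 3) := by
  
  intro n
  have hcover : ∀ k : Fin 3, k = 0 ∨ k = 1 ∨ k = 2 := by decide
  have c0 : ((0 : Fin 3) : ℤ) = 0 := by decide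
  have c1 : ((1 : Fin 3) : ℤ) = 1 := by decide
  have c2 : ((2 : Fin 3) : ℤ) = 2 := by decide
  have hm : n % 3 = 0 ∨ n % 3 = 1 ∨ n % 3 = 2 := by omega
  rcases hm with h | h | h
  · exact stmt17_aux μ ε hε phase flip hjoint X hX n 0 1 2 hcover
      (by rw [c0]; omega) (by rw [c1]; omega) (by rw [c2]; omega)
  · exact stmt17_aux μ ε hε phase flip hjoint X hX n 2 0 1
      (fun k => (hcover k).elim (fun h => Or.inr (Or.inl h))
        (fun h => h.elim (fun h => Or.inr (Or.inr h)) Or.inl))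
      (by rw [c2]; omega) (by rw [c0]; omega) (by rw [c1]; omega)
  · exact stmt17_aux μ ε hε phase flip hjoint X hX n 1 2 0
      (fun k => (hcover k).elim (fun h => Or.inr (Or.inr h))
        (fun h => h.elim Or.inl (fun h => Or.inr (Or.inl h))))
      (by rw [c1]; omega) (by rw [c2]; omega) (by rw [c0]; omega)
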